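/- arXiv:math/0509018 — 3 statements merged into one kernel-verified Lean document; each statement's English description precedes it below -/
import Mathlib

section
/- With the Witt basis elements 𝔣, 𝔣⁺ as above, the operator D±_{x,t} = Σⱼ eⱼ ∂/∂xⱼ + 𝔣 ∂ₜ ± i𝔣⁺ (with i the complex imaginary unit, commuting with all generators) satisfies (D±_{x,t})²u = -Δu ± i ∂ₜ u for smooth complexified-Clifford-valued functions u; in particular D⁻_{x,t} squares to the Schrödinger operator -Δ - i∂ₜ. -/
open scoped BigOperators

section pdaux
variable {A : Type*} [NormedRing A] [NormedAlgebra ℂ A]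
    [NormedSpace ℝ A] [IsScalarTower ℝ ℂ A]

/-- Left multiplication by `d` as a continuous `ℝ`-linear map. -/
noncomputable def pdMulL (d : A) : A →L[ℝ] A :=
  (ContinuousLinearMap.mul ℂ A d).restrictScalars ℝ

@[simp] lemma pdMulL_apply (d x : A) : pdMulL d x = d * x := rfl

/-- Scalar multiplication by `c : ℂ` as a continuous `ℝ`-linear map. -/
noncomputable def pdSmulL (c : ℂ) : A →L[ℝ] A :=
  (c • ContinuousLinearMap.id ℂ A).restrictScalars ℝ

@[simp] lemma pdSmulL_apply (c : ℂ) (x : A) : pdSmulL c x = c • x := rfl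

/-- The purely algebraic core of the factorization. -/
lemma pd_algebra {n : ℕ} (e : Fin n → A) (fW fP : A)
    (he : ∀ i j : Fin n, e i * e j + e j * e i = if i = j then (-2 : A) else 0)
    (hW : fW * fP + fP * fW = 1) (hW2 : fW * fW = 0) (hP2 : fP * fP = 0)
    (hWe : ∀ j, fW * e j + e j * fW = 0) (hPe : ∀ j, fP * e j + e j * fP = 0)
    (c : ℂ) (a : Fin n → Fin n → A) (hsym : ∀ i j, a i j = a j i)
    (b : Fin n → A) (t : A) (gi : Fin n → A) (gt up : A) :
    (∑ i, e i * ((∑ j, e j * a i j) + fW * b i + c • (fP * gi i)))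
      + fW * ((∑ j, e j * b j) + fW * t + c • (fP * gt))
      + c • (fP * ((∑ j, e j * gi j) + fW * gt + c • (fP * up)))
      = (-∑ j, a j j) + c • gt := by
  have expand :
      (∑ i, e i * ((∑ j, e j * a i j) + fW * b i + c • (fP * gi i)))
        + fW * ((∑ j, e j * b j) + fW * t + c • (fP * gt))
        + c • (fP * ((∑ j, e j * gi j) + fW * gt + c • (fP * up)))
      = ((∑ i, e i * ∑ j, e j * a i j)
          + ((∑ i, e i * (fW * b i)) + ∑ i, fW * (e i * b i))
          + ((∑ i, e i * (c • (fP * gi i))) + ∑ i, c • (fP * (e i * gi i)))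
          + (fW * (fW * t))
          + ((fW * (c • (fP * gt))) + c • (fP * (fW * gt)))
          + c • (fP * (c • (fP * up)))) := by
    simp only [mul_add, smul_add, Finset.mul_sum, Finset.sum_add_distrib,
      Finset.smul_sum]
    abel
  rw [expand]
  have hS1 : (∑ i, e i * ∑ j, e j * a i j) = -∑ j, a j j := by
    have hdouble : (∑ i, e i * ∑ j, e j * a i j) + (∑ i, e i * ∑ j, e j * a i j)
        = (-∑ j, a j j) + (-∑ j, a j j) := by
      have copy1 : (∑ i, e i * ∑ j, e j * a i j)
          = ∑ i : Fin n, ∑ j : Fin n, e i * (e j * a i j) :=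
        Finset.sum_congr rfl fun i _ => Finset.mul_sum _ _ _
      have copy2 : (∑ i, e i * ∑ j, e j * a i j)
          = ∑ i : Fin n, ∑ j : Fin n, e j * (e i * a i j) := by
        rw [copy1, Finset.sum_comm]
        refine Finset.sum_congr rfl fun i _ => Finset.sum_congr rfl fun j _ => ?_
        rw [hsym]
      calc (∑ i, e i * ∑ j, e j * a i j) + (∑ i, e i * ∑ j, e j * a i j)
          = (∑ i : Fin n, ∑ j : Fin n, e i * (e j * a i j))
            + ∑ i : Fin n, ∑ j : Fin n, e j * (e i * a i j) := by
            nth_rewrite 2 [copy2]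
            rw [copy1]
        _ = ∑ i : Fin n, ∑ j : Fin n, (e i * e j + e j * e i) * a i j := by
            rw [← Finset.sum_add_distrib]
            refine Finset.sum_congr rfl fun i _ => ?_
            rw [← Finset.sum_add_distrib]
            exact Finset.sum_congr rfl fun j _ => by rw [add_mul, mul_assoc, mul_assoc]
        _ = ∑ i : Fin n, (-2 : A) * a i i := by
            refine Finset.sum_congr rfl fun i _ => ?_
            simp [he, ite_mul]
        _ = (-∑ j, a j j) + (-∑ j, a j j) := by
            have hx : ∀ i : Fin n, (-2 : A) * a i i = (- a i i) + (- a i i) := fun i => by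
              rw [neg_mul, two_mul, neg_add]
            rw [Finset.sum_congr rfl fun i _ => hx i, Finset.sum_add_distrib]
            simp
    have key : ∀ x y : A, x + x = y + y → x = y := by
      intro x y h
      have h2 : (2 : ℂ) • x = (2 : ℂ) • y := by
        rw [two_smul ℂ x, two_smul ℂ y]; exact h
      calc x = (2 : ℂ)⁻¹ • ((2 : ℂ) • x) := by rw [smul_smul]; norm_num
        _ = (2 : ℂ)⁻¹ • ((2 : ℂ) • y) := by rw [h2]
        _ = y := by rw [smul_smul]; norm_num
    exact key _ _ hdouble
  have hS2 : (∑ i, e i * (fW * b i)) + ∑ i, fW * (e i * b i) = 0 := by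
    rw [← Finset.sum_add_distrib]
    refine Finset.sum_eq_zero fun i _ => ?_
    rw [← mul_assoc, ← mul_assoc, ← add_mul, add_comm, hWe, zero_mul]
  have hS3 : (∑ i, e i * (c • (fP * gi i))) + ∑ i, c • (fP * (e i * gi i)) = 0 := by
    rw [← Finset.sum_add_distrib]
    refine Finset.sum_eq_zero fun i _ => ?_
    rw [mul_smul_comm, ← smul_add, ← mul_assoc, ← mul_assoc, ← add_mul, add_comm,
      hPe, zero_mul, smul_zero]
  have hT2 : fW * (fW * t) = 0 := by rw [← mul_assoc, hW2, zero_mul]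
  have hT3 : (fW * (c • (fP * gt))) + c • (fP * (fW * gt)) = c • gt := by
    rw [mul_smul_comm, ← smul_add, ← mul_assoc, ← mul_assoc, ← add_mul, hW, one_mul]
  have hU3 : c • (fP * (c • (fP * up))) = 0 := by
    rw [mul_smul_comm, ← mul_assoc, hP2, zero_mul, smul_zero, smul_zero]
  rw [hS1, hS2, hS3, hT2, hT3, hU3]
  abel

end pdaux

/-- With Witt basis elements `𝔣, 𝔣⁺`, the operator
`D±_{x,t} = Σⱼ eⱼ∂ⱼ + 𝔣∂ₜ ± i𝔣⁺` satisfies `(D±_{x,t})²u = -Δu ± i∂ₜu`; in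
particular `D⁻_{x,t}` squares to the Schrödinger operator `-Δ - i∂ₜ`. -/
theorem parabolic_dirac_factorizes_schroedinger
    {n : ℕ} {A : Type*} [NormedRing A] [NormedAlgebra ℂ A]
    [NormedSpace ℝ A] [IsScalarTower ℝ ℂ A]
    (e : Fin n → A) (fW fP : A)
    (he : ∀ i j : Fin n, e i * e j + e j * e i = if i = j then (-2 : A) else 0)
    (hW : fW * fP + fP * fW = 1) (hW2 : fW * fW = 0) (hP2 : fP * fP = 0)
    (hWe : ∀ j, fW * e j + e j * fW = 0) (hPe : ∀ j, fP * e j + e j * fP = 0)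
    (σ : ℂ) (hσ : σ = 1 ∨ σ = -1)
    (u : (Fin n → ℝ) × ℝ → A) (hu : ContDiff ℝ 2 u) (p : (Fin n → ℝ) × ℝ) :
    (∑ i, e i * fderiv ℝ (fun q => (∑ j, e j * fderiv ℝ u q (Pi.single j 1, 0))
            + fW * fderiv ℝ u q (0, 1) + (σ * Complex.I) • (fP * u q)) p (Pi.single i 1, 0))
      + fW * fderiv ℝ (fun q => (∑ j, e j * fderiv ℝ u q (Pi.single j 1, 0))
            + fW * fderiv ℝ u q (0, 1) + (σ * Complex.I) • (fP * u q)) p (0, 1)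
      + (σ * Complex.I) • (fP * ((∑ j, e j * fderiv ℝ u p (Pi.single j 1, 0))
            + fW * fderiv ℝ u p (0, 1) + (σ * Complex.I) • (fP * u p)))
      = (-∑ j, fderiv ℝ (fun q => fderiv ℝ u q (Pi.single j 1, 0)) p (Pi.single j 1, 0))
        + (σ * Complex.I) • fderiv ℝ u p (0, 1) := by
  have hud : ∀ y, HasFDerivAt u (fderiv ℝ u y) y := fun y =>
    ((hu.differentiable (by norm_num)) y).hasFDerivAt
  have hF1 : ContDiff ℝ 1 (fderiv ℝ u) := hu.fderiv_right (by norm_num)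
  have hD2 : HasFDerivAt (fderiv ℝ u) (fderiv ℝ (fderiv ℝ u) p) p :=
    ((hF1.differentiable one_ne_zero) p).hasFDerivAt
  set D2 := fderiv ℝ (fderiv ℝ u) p with hD2def
  have hsym : ∀ v w, D2 v w = D2 w v := second_derivative_symmetric hud hD2
  have hder : ∀ v : (Fin n → ℝ) × ℝ, HasFDerivAt (fun q => fderiv ℝ u q v)
      ((ContinuousLinearMap.apply ℝ A v).comp D2) p := fun v =>
    ((ContinuousLinearMap.apply ℝ A v).hasFDerivAt).comp p hD2
  have hDv : HasFDerivAt
      (fun q => (∑ j, e j * fderiv ℝ u q (Pi.single j 1, 0))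
          + fW * fderiv ℝ u q (0, 1) + (σ * Complex.I) • (fP * u q))
      ((∑ j, (pdMulL (e j)).comp
          ((ContinuousLinearMap.apply ℝ A ((Pi.single j 1 : Fin n → ℝ), (0:ℝ))).comp D2))
        + (pdMulL fW).comp ((ContinuousLinearMap.apply ℝ A ((0 : Fin n → ℝ), (1:ℝ))).comp D2)
        + (pdSmulL (σ * Complex.I)).comp ((pdMulL fP).comp (fderiv ℝ u p))) p := by
    refine HasFDerivAt.add (HasFDerivAt.add ?_ ?_) ?_
    · exact HasFDerivAt.fun_sum fun j _ => ((pdMulL (e j)).hasFDerivAt).comp p (hder _)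
    · exact ((pdMulL fW).hasFDerivAt).comp p (hder _)
    · exact ((pdSmulL (σ * Complex.I)).hasFDerivAt).comp p
        (((pdMulL fP).hasFDerivAt).comp p (hud p))
  have hR : ∀ j : Fin n, fderiv ℝ (fun q => fderiv ℝ u q (Pi.single j 1, 0)) p
      = (ContinuousLinearMap.apply ℝ A ((Pi.single j 1 : Fin n → ℝ), (0:ℝ))).comp D2 :=
    fun j => (hder _).fderiv
  rw [hDv.fderiv]
  simp only [hR, ContinuousLinearMap.add_apply, ContinuousLinearMap.coe_sum',
    Finset.sum_apply, ContinuousLinearMap.comp_apply, ContinuousLinearMap.apply_apply,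
    pdMulL_apply, pdSmulL_apply]
  simp only [hsym _ ((0 : Fin n → ℝ), (1 : ℝ))]
  exact pd_algebra e fW fP he hW hW2 hP2 hWe hPe (σ * Complex.I)
    (fun i j => D2 ((Pi.single i 1 : Fin n → ℝ), (0:ℝ)) ((Pi.single j 1 : Fin n → ℝ), (0:ℝ)))
    (fun i j => hsym _ _)
    (fun i => D2 ((0 : Fin n → ℝ), (1:ℝ)) ((Pi.single i 1 : Fin n → ℝ), (0:ℝ)))
    (D2 ((0 : Fin n → ℝ), (1:ℝ)) ((0 : Fin n → ℝ), (1:ℝ)))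
    (fun i => fderiv ℝ u p ((Pi.single i 1 : Fin n → ℝ), (0:ℝ)))
    (fderiv ℝ u p ((0 : Fin n → ℝ), (1:ℝ))) (u p)
end

section
/- Let D be the Dirac operator, a : ℝⁿ → Cl(0,n) smooth, and M^a the right-multiplication operator M^a u = u·a. Then for smooth scalar-valued u (i.e. u = u·e₀ with u real-valued), (D + M^a)(D - M^a)u = -Δu - (Da + a²)u. Consequently (D + M^a)(D - M^a) equals the Schrödinger operator -Δ - V₀ on scalar functions if and only if Da + a² = V₀ (the Miura transform). -/
open scoped BigOperators

/-- Auxiliary: a symmetric quadratic form contracted with Clifford generators gives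
minus the trace times 1. -/
lemma clifford_symm_contract {n : ℕ} {A : Type*} [NormedRing A] [NormedAlgebra ℝ A]
    (e : Fin n → A)
    (he : ∀ i j : Fin n, e i * e j + e j * e i = if i = j then (-2 : A) else 0)
    (c : Fin n → Fin n → ℝ) (hc : ∀ i j, c i j = c j i) :
    ∑ i, ∑ j, c i j • (e i * e j) = (-∑ i, c i i) • (1 : A) := by
  have hswap : ∑ i, ∑ j, c i j • (e i * e j) = ∑ i, ∑ j, c i j • (e j * e i) := by
    rw [Finset.sum_comm]
    exact Finset.sum_congr rfl fun i _ => Finset.sum_congr rfl fun j _ => by rw [hc]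
  have h2 : (2 : ℝ) • (∑ i, ∑ j, c i j • (e i * e j))
      = ∑ i, ∑ j, c i j • (e i * e j + e j * e i) := by
    rw [two_smul]
    nth_rewrite 2 [hswap]
    simp [← Finset.sum_add_distrib, smul_add]
  have h3 : (2 : ℝ) • (∑ i, ∑ j, c i j • (e i * e j))
      = ∑ i, c i i • (-2 : A) := by
    rw [h2]
    refine Finset.sum_congr rfl fun i _ => ?_
    rw [Finset.sum_eq_single i]
    · rw [he i i]; simp
    · intro j _ hji
      rw [he i j]
      simp [(Ne.symm hji : ¬ i = j)]
    · simp
  have : ∑ i, ∑ j, c i j • (e i * e j)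
      = (2⁻¹ : ℝ) • ((2 : ℝ) • (∑ i, ∑ j, c i j • (e i * e j))) := by
    rw [smul_smul]; norm_num
  rw [this, h3]
  have hm2 : (-2 : A) = (-2 : ℝ) • (1 : A) := by
    rw [neg_smul, two_smul]; norm_num
  rw [hm2]
  simp only [smul_smul, Finset.smul_sum, ← Finset.sum_smul]
  congr 1
  rw [Finset.mul_sum, ← Finset.sum_neg_distrib]
  exact Finset.sum_congr rfl fun i _ => by ring

/-- With `M^a` right multiplication by `a`, for scalar-valued `u`:
`(D + M^a)(D - M^a)u = -Δu - (Da + a²)u`; consequently this equals the Schrödinger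
operator `-Δ - V₀` on scalar functions iff `Da + a² = V₀` (the Miura transform). -/
theorem dirac_right_mult_factorization
    {n : ℕ} {A : Type*} [NormedRing A] [NormedAlgebra ℝ A]
    (e : Fin n → A)
    (he : ∀ i j : Fin n, e i * e j + e j * e i = if i = j then (-2 : A) else 0)
    (a : (Fin n → ℝ) → A) (ha : ContDiff ℝ 1 a) (V₀ : (Fin n → ℝ) → ℝ) :
    (∀ u : (Fin n → ℝ) → ℝ, ContDiff ℝ 2 u → ∀ x : Fin n → ℝ,
      (∑ i, e i * fderiv ℝ (fun y =>
            (∑ j, fderiv ℝ u y (Pi.single j 1) • e j) - u y • a y) x (Pi.single i 1))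
        + ((∑ j, fderiv ℝ u x (Pi.single j 1) • e j) - u x • a x) * a x
      = (-∑ j, fderiv ℝ (fun y => fderiv ℝ u y (Pi.single j 1)) x (Pi.single j 1)) • (1 : A)
        - u x • ((∑ j, e j * fderiv ℝ a x (Pi.single j 1)) + a x * a x)) ∧
    ((∀ u : (Fin n → ℝ) → ℝ, ContDiff ℝ 2 u → ∀ x : Fin n → ℝ,
      (∑ i, e i * fderiv ℝ (fun y =>
            (∑ j, fderiv ℝ u y (Pi.single j 1) • e j) - u y • a y) x (Pi.single i 1))
        + ((∑ j, fderiv ℝ u x (Pi.single j 1) • e j) - u x • a x) * a x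
      = (-∑ j, fderiv ℝ (fun y => fderiv ℝ u y (Pi.single j 1)) x (Pi.single j 1)) • (1 : A)
        - (V₀ x * u x) • (1 : A)) ↔
      ∀ x : Fin n → ℝ,
        (∑ j, e j * fderiv ℝ a x (Pi.single j 1)) + a x * a x
          = algebraMap ℝ A (V₀ x)) := by
  have hda : Differentiable ℝ a := ha.differentiable one_ne_zero
  have key : ∀ u : (Fin n → ℝ) → ℝ, ContDiff ℝ 2 u → ∀ x : Fin n → ℝ,
      (∑ i, e i * fderiv ℝ (fun y =>
            (∑ j, fderiv ℝ u y (Pi.single j 1) • e j) - u y • a y) x (Pi.single i 1))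
        + ((∑ j, fderiv ℝ u x (Pi.single j 1) • e j) - u x • a x) * a x
      = (-∑ j, fderiv ℝ (fun y => fderiv ℝ u y (Pi.single j 1)) x (Pi.single j 1)) • (1 : A)
        - u x • ((∑ j, e j * fderiv ℝ a x (Pi.single j 1)) + a x * a x) := by
    intro u hu x
    have hu1 : Differentiable ℝ u := hu.differentiable two_ne_zero
    have hfd : ContDiff ℝ 1 (fderiv ℝ u) := hu.fderiv_right (le_refl 2)
    have hfdd : Differentiable ℝ (fderiv ℝ u) := hfd.differentiable one_ne_zero
    have hdj : ∀ v : Fin n → ℝ, DifferentiableAt ℝ (fun y => fderiv ℝ u y v) x :=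
      fun v => (hfdd x).clm_apply (differentiableAt_const v)
    have hder : ∀ v : Fin n → ℝ,
        fderiv ℝ (fun y => fderiv ℝ u y v) x = (fderiv ℝ (fderiv ℝ u) x).flip v := by
      intro v
      rw [fderiv_clm_apply (hfdd x) (differentiableAt_const v)]
      simp
    have hsymm : ∀ v w, fderiv ℝ (fderiv ℝ u) x v w = fderiv ℝ (fderiv ℝ u) x w v :=
      second_derivative_symmetric (fun y => (hu1 y).hasFDerivAt) (hfdd x).hasFDerivAt
    set c : Fin n → Fin n → ℝ := fun i j => fderiv ℝ (fderiv ℝ u) x (Pi.single i 1) (Pi.single j 1)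
      with hcdef
    have hcs : ∀ i j, c i j = c j i := fun i j => hsymm _ _
    -- differentiability of the pieces
    have hsumdiff : DifferentiableAt ℝ
        (fun y => ∑ j, fderiv ℝ u y (Pi.single j 1) • e j) x :=
      DifferentiableAt.fun_sum fun j _ => (hdj _).smul_const (e j)
    have hua : DifferentiableAt ℝ (fun y => u y • a y) x := (hu1 x).smul (hda x)
    -- compute the inner fderiv
    have hg : ∀ i : Fin n, fderiv ℝ (fun y =>
          (∑ j, fderiv ℝ u y (Pi.single j 1) • e j) - u y • a y) x (Pi.single i 1)
        = (∑ j, c i j • e j)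
          - (fderiv ℝ u x (Pi.single i 1) • a x + u x • fderiv ℝ a x (Pi.single i 1)) := by
      intro i
      rw [fderiv_fun_sub hsumdiff hua, fderiv_fun_sum (fun j _ => (hdj _).smul_const (e j)),
        fderiv_fun_smul (hu1 x) (hda x)]
      simp only [ContinuousLinearMap.sub_apply, ContinuousLinearMap.sum_apply,
        ContinuousLinearMap.add_apply, ContinuousLinearMap.smul_apply,
        ContinuousLinearMap.smulRight_apply]
      rw [add_comm (u x • _)]
      congr 1
      refine Finset.sum_congr rfl fun j _ => ?_
      rw [fderiv_smul_const (hdj _) (e j), ContinuousLinearMap.smulRight_apply, hder,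
        ContinuousLinearMap.flip_apply]
    have hlap : ∀ j : Fin n,
        fderiv ℝ (fun y => fderiv ℝ u y (Pi.single j 1)) x (Pi.single j 1) = c j j := by
      intro j
      rw [hder, ContinuousLinearMap.flip_apply]
    simp only [hg, hlap]
    have hcl := clifford_symm_contract e he c hcs
    calc (∑ i, e i * ((∑ j, c i j • e j)
            - (fderiv ℝ u x (Pi.single i 1) • a x + u x • fderiv ℝ a x (Pi.single i 1))))
          + ((∑ j, fderiv ℝ u x (Pi.single j 1) • e j) - u x • a x) * a x
        = ((∑ i, ∑ j, c i j • (e i * e j))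
            - (∑ i, fderiv ℝ u x (Pi.single i 1) • (e i * a x))
            - ∑ i, u x • (e i * fderiv ℝ a x (Pi.single i 1)))
          + ((∑ j, fderiv ℝ u x (Pi.single j 1) • (e j * a x)) - u x • (a x * a x)) := by
          simp only [mul_sub, mul_add, Finset.mul_sum, Finset.sum_sub_distrib,
            mul_smul_comm, smul_mul_assoc, sub_mul, Finset.sum_mul, Finset.sum_add_distrib,
            sub_sub]
      _ = (∑ i, ∑ j, c i j • (e i * e j))
            - (u x • (∑ i, e i * fderiv ℝ a x (Pi.single i 1)) + u x • (a x * a x)) := by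
          rw [Finset.smul_sum]; abel
      _ = (-∑ j, c j j) • (1 : A)
            - u x • ((∑ j, e j * fderiv ℝ a x (Pi.single j 1)) + a x * a x) := by
          rw [hcl, smul_add]
  refine ⟨key, ?_, ?_⟩
  · intro h x
    have h1 := h (fun _ => 1) contDiff_const x
    have hfz : fderiv ℝ (fun _ : Fin n → ℝ => (1 : ℝ)) = fun _ => 0 := by
      funext y; exact fderiv_const_apply 1
    rw [hfz] at h1
    simp only [ContinuousLinearMap.zero_apply, zero_smul, Finset.sum_const_zero, one_smul,
      zero_sub, fderiv_fun_neg, fderiv_fun_const, Pi.zero_apply, ContinuousLinearMap.neg_apply,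
      mul_neg, neg_mul, neg_zero, neg_neg, Finset.sum_neg_distrib, mul_one] at h1
    rw [Algebra.algebraMap_eq_smul_one]
    have h2 : -((∑ j, e j * fderiv ℝ a x (Pi.single j 1)) + a x * a x)
        = -(V₀ x • (1 : A)) := by rw [neg_add]; exact h1
    exact neg_injective h2
  · intro h u hu x
    rw [key u hu x, h x]
    rw [Algebra.algebraMap_eq_smul_one, smul_smul, mul_comm]
end

section
/- In the complexified Clifford-Witt algebra, let D⁻_{x,t} = Σⱼ eⱼ∂/∂xⱼ + 𝔣∂ₜ - i𝔣⁺ and let M^a denote right multiplication by a smooth function a(x,t). Then for scalar-valued smooth u(x,t), (D⁻_{x,t} + M^a)(D⁻_{x,t} - M^a)u = (-i∂ₜ - Δ)u - u·(D_x a + 𝔣·∂ₜa + a²). Hence this factorizes the non-stationary Schrödinger operator -i∂ₜ - Δ - V if and only if D_x a + 𝔣(∂ₜa) + a² = V. -/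
open scoped BigOperators

lemma cw_sum_sq {n : ℕ} {A : Type*} [Ring A] [Algebra ℂ A]
    (e : Fin n → A)
    (he : ∀ i j : Fin n, e i * e j + e j * e i = if i = j then (-2 : A) else 0)
    (d : Fin n → Fin n → ℂ) (hd : ∀ i j, d i j = d j i) :
    ∑ i, ∑ j, d i j • (e i * e j) = (-∑ j, d j j) • (1 : A) := by
  have hswap : ∑ i, ∑ j, d i j • (e i * e j) = ∑ i, ∑ j, d i j • (e j * e i) := by
    rw [Finset.sum_comm]
    exact Finset.sum_congr rfl fun i _ => Finset.sum_congr rfl fun j _ => by rw [hd]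
  have h2 : (2:ℂ) • (∑ i, ∑ j, d i j • (e i * e j))
      = (2:ℂ) • ((-∑ j, d j j) • (1 : A)) := by
    calc (2:ℂ) • (∑ i, ∑ j, d i j • (e i * e j))
        = (∑ i, ∑ j, d i j • (e i * e j)) + ∑ i, ∑ j, d i j • (e j * e i) := by
          rw [two_smul]; nth_rewrite 2 [hswap]; rfl
      _ = ∑ i, ∑ j, d i j • (e i * e j + e j * e i) := by
          rw [← Finset.sum_add_distrib]
          exact Finset.sum_congr rfl fun i _ => by
            rw [← Finset.sum_add_distrib]
            exact Finset.sum_congr rfl fun j _ => (smul_add _ _ _).symm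
      _ = ∑ i, d i i • (-2 : A) := by
          simp only [he]
          exact Finset.sum_congr rfl fun i _ => by
            simp [Finset.sum_ite_eq', smul_ite]
      _ = (2:ℂ) • ((-∑ j, d j j) • (1 : A)) := by
          have h0 : (-2 : A) = (-2 : ℂ) • (1 : A) := by
            rw [← Algebra.algebraMap_eq_smul_one, map_neg, map_ofNat]
          rw [h0]
          simp only [smul_smul, ← Finset.sum_smul]
          congr 1
          rw [← Finset.sum_mul]
          ring
  have := congrArg (fun x => ((2:ℂ)⁻¹) • x) h2
  simpa [smul_smul, inv_mul_cancel₀ (two_ne_zero (α := ℂ))] using this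

lemma cw_cross {n : ℕ} {A : Type*} [Ring A] [Module ℂ A]
    (e : Fin n → A) (b : A) (hb : ∀ j, b * e j + e j * b = 0) (c : Fin n → ℂ) :
    ((∑ i, c i • (e i * b)) + ∑ j, c j • (b * e j)) = 0 := by
  rw [← Finset.sum_add_distrib]
  refine Finset.sum_eq_zero fun i _ => ?_
  rw [← smul_add, add_comm, hb, smul_zero]

lemma cw_main {n : ℕ} {A : Type*} [Ring A] [Algebra ℂ A]
    (e : Fin n → A) (fW fP aa : A)
    (he : ∀ i j : Fin n, e i * e j + e j * e i = if i = j then (-2 : A) else 0)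
    (hW : fW * fP + fP * fW = 1) (hW2 : fW * fW = 0) (hP2 : fP * fP = 0)
    (hWe : ∀ j, fW * e j + e j * fW = 0) (hPe : ∀ j, fP * e j + e j * fP = 0)
    (c : Fin n → ℂ) (ct uu : ℂ)
    (d : Fin n → Fin n → ℂ) (hd : ∀ i j, d i j = d j i)
    (dt : Fin n → ℂ) (dtt : ℂ) (Da : Fin n → A) (Dat : A) :
    (∑ i, e i * ((∑ j, d i j • e j) + dt i • fW - (Complex.I * c i) • fP
        - (uu • Da i + c i • aa)))
      + fW * ((∑ j, dt j • e j) + dtt • fW - (Complex.I * ct) • fP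
        - (uu • Dat + ct • aa))
      - Complex.I • (fP * ((∑ j, c j • e j) + ct • fW - (Complex.I * uu) • fP - uu • aa))
      + ((∑ j, c j • e j) + ct • fW - (Complex.I * uu) • fP - uu • aa) * aa
    = (-Complex.I * ct - ∑ j, d j j) • (1 : A)
      - uu • ((∑ j, e j * Da j) + fW * Dat + aa * aa) := by
  have hE1 : ∑ i, ∑ j, d i j • (e i * e j) = (-∑ j, d j j) • (1 : A) :=
    cw_sum_sq e he d hd
  have hE2 : ((∑ i, dt i • (e i * fW)) + ∑ j, dt j • (fW * e j)) = 0 :=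
    cw_cross e fW hWe dt
  have hE3 : ((∑ i, (Complex.I * c i) • (e i * fP))
      + ∑ j, (Complex.I * c j) • (fP * e j)) = 0 :=
    cw_cross e fP hPe fun j => Complex.I * c j
  have hW' : (Complex.I * ct) • (fW * fP) + (Complex.I * ct) • (fP * fW)
      = (Complex.I * ct) • (1 : A) := by rw [← smul_add, hW]
  simp only [mul_add, add_mul, mul_sub, sub_mul, Finset.mul_sum, Finset.sum_mul,
    mul_smul_comm, smul_mul_assoc, smul_add, smul_sub, smul_smul, Finset.smul_sum,
    Finset.sum_add_distrib, Finset.sum_sub_distrib, hW2, hP2, smul_zero, mul_zero,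
    zero_mul, sub_zero, add_zero, zero_add]
  linear_combination (norm := module) hE1 + hE2 - hE3 - hW'

/-- In the complexified Clifford–Witt algebra, with
`D⁻ = Σⱼeⱼ∂ⱼ + 𝔣∂ₜ - i𝔣⁺` and `M^a` right multiplication, for scalar-valued `u`:
`(D⁻ + M^a)(D⁻ - M^a)u = (-i∂ₜ - Δ)u - u(D_x a + 𝔣∂ₜa + a²)`; hence this factorizes
the non-stationary Schrödinger operator `-i∂ₜ - Δ - V` iff `D_x a + 𝔣∂ₜa + a² = V`. -/
theorem parabolic_dirac_right_mult_factorization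
    {n : ℕ} {A : Type*} [NormedRing A] [NormedAlgebra ℂ A]
    [NormedSpace ℝ A] [IsScalarTower ℝ ℂ A]
    (e : Fin n → A) (fW fP : A)
    (he : ∀ i j : Fin n, e i * e j + e j * e i = if i = j then (-2 : A) else 0)
    (hW : fW * fP + fP * fW = 1) (hW2 : fW * fW = 0) (hP2 : fP * fP = 0)
    (hWe : ∀ j, fW * e j + e j * fW = 0) (hPe : ∀ j, fP * e j + e j * fP = 0)
    (a : (Fin n → ℝ) × ℝ → A) (ha : ContDiff ℝ 1 a)
    (V : (Fin n → ℝ) × ℝ → ℂ) :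
    (∀ u : (Fin n → ℝ) × ℝ → ℂ, ContDiff ℝ 2 u → ∀ p : (Fin n → ℝ) × ℝ,
      (∑ i, e i * fderiv ℝ (fun q =>
            (∑ j, fderiv ℝ u q (Pi.single j 1, 0) • e j)
              + fderiv ℝ u q (0, 1) • fW - (Complex.I * u q) • fP - u q • a q)
          p (Pi.single i 1, 0))
        + fW * fderiv ℝ (fun q =>
            (∑ j, fderiv ℝ u q (Pi.single j 1, 0) • e j)
              + fderiv ℝ u q (0, 1) • fW - (Complex.I * u q) • fP - u q • a q) p (0, 1)
        - Complex.I • (fP * ((∑ j, fderiv ℝ u p (Pi.single j 1, 0) • e j)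
              + fderiv ℝ u p (0, 1) • fW - (Complex.I * u p) • fP - u p • a p))
        + ((∑ j, fderiv ℝ u p (Pi.single j 1, 0) • e j)
              + fderiv ℝ u p (0, 1) • fW - (Complex.I * u p) • fP - u p • a p) * a p
      = (-Complex.I * fderiv ℝ u p (0, 1)
          - ∑ j, fderiv ℝ (fun q => fderiv ℝ u q (Pi.single j 1, 0)) p
              (Pi.single j 1, 0)) • (1 : A)
        - u p • ((∑ j, e j * fderiv ℝ a p (Pi.single j 1, 0))
              + fW * fderiv ℝ a p (0, 1) + a p * a p)) ∧
    ((∀ p : (Fin n → ℝ) × ℝ,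
        (∑ j, e j * fderiv ℝ a p (Pi.single j 1, 0))
            + fW * fderiv ℝ a p (0, 1) + a p * a p = algebraMap ℂ A (V p)) →
      ∀ u : (Fin n → ℝ) × ℝ → ℂ, ContDiff ℝ 2 u → ∀ p : (Fin n → ℝ) × ℝ,
      (∑ i, e i * fderiv ℝ (fun q =>
            (∑ j, fderiv ℝ u q (Pi.single j 1, 0) • e j)
              + fderiv ℝ u q (0, 1) • fW - (Complex.I * u q) • fP - u q • a q)
          p (Pi.single i 1, 0))
        + fW * fderiv ℝ (fun q =>
            (∑ j, fderiv ℝ u q (Pi.single j 1, 0) • e j)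
              + fderiv ℝ u q (0, 1) • fW - (Complex.I * u q) • fP - u q • a q) p (0, 1)
        - Complex.I • (fP * ((∑ j, fderiv ℝ u p (Pi.single j 1, 0) • e j)
              + fderiv ℝ u p (0, 1) • fW - (Complex.I * u p) • fP - u p • a p))
        + ((∑ j, fderiv ℝ u p (Pi.single j 1, 0) • e j)
              + fderiv ℝ u p (0, 1) • fW - (Complex.I * u p) • fP - u p • a p) * a p
      = (-Complex.I * fderiv ℝ u p (0, 1)
          - ∑ j, fderiv ℝ (fun q => fderiv ℝ u q (Pi.single j 1, 0)) p
              (Pi.single j 1, 0) - V p * u p) • (1 : A)) := by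
  have key : ∀ u : (Fin n → ℝ) × ℝ → ℂ, ContDiff ℝ 2 u → ∀ p : (Fin n → ℝ) × ℝ,
      (∑ i, e i * fderiv ℝ (fun q =>
            (∑ j, fderiv ℝ u q (Pi.single j 1, 0) • e j)
              + fderiv ℝ u q (0, 1) • fW - (Complex.I * u q) • fP - u q • a q)
          p (Pi.single i 1, 0))
        + fW * fderiv ℝ (fun q =>
            (∑ j, fderiv ℝ u q (Pi.single j 1, 0) • e j)
              + fderiv ℝ u q (0, 1) • fW - (Complex.I * u q) • fP - u q • a q) p (0, 1)
        - Complex.I • (fP * ((∑ j, fderiv ℝ u p (Pi.single j 1, 0) • e j)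
              + fderiv ℝ u p (0, 1) • fW - (Complex.I * u p) • fP - u p • a p))
        + ((∑ j, fderiv ℝ u p (Pi.single j 1, 0) • e j)
              + fderiv ℝ u p (0, 1) • fW - (Complex.I * u p) • fP - u p • a p) * a p
      = (-Complex.I * fderiv ℝ u p (0, 1)
          - ∑ j, fderiv ℝ (fun q => fderiv ℝ u q (Pi.single j 1, 0)) p
              (Pi.single j 1, 0)) • (1 : A)
        - u p • ((∑ j, e j * fderiv ℝ a p (Pi.single j 1, 0))
              + fW * fderiv ℝ a p (0, 1) + a p * a p) := by
    intro u hu p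
    have hDu : HasFDerivAt u (fderiv ℝ u p) p :=
      (hu.differentiable (by norm_num) p).hasFDerivAt
    have hDa : HasFDerivAt a (fderiv ℝ a p) p :=
      (ha.differentiable (by norm_num) p).hasFDerivAt
    have hD2 : HasFDerivAt (fderiv ℝ u) (fderiv ℝ (fderiv ℝ u) p) p :=
      ((hu.fderiv_right (m := 1) (by norm_num)).differentiable (by norm_num) p).hasFDerivAt
    have hEval : ∀ w : (Fin n → ℝ) × ℝ, HasFDerivAt (fun q => fderiv ℝ u q w)
        ((ContinuousLinearMap.apply ℝ ℂ w).comp (fderiv ℝ (fderiv ℝ u) p)) p :=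
      fun w => (ContinuousLinearMap.apply ℝ ℂ w).hasFDerivAt.comp p hD2
    have hsym : ∀ v w, fderiv ℝ (fderiv ℝ u) p v w = fderiv ℝ (fderiv ℝ u) p w v :=
      hu.contDiffAt.isSymmSndFDerivAt (by norm_num)
    have hg : HasFDerivAt (fun q =>
        (∑ j, fderiv ℝ u q (Pi.single j 1, 0) • e j)
          + fderiv ℝ u q (0, 1) • fW - (Complex.I * u q) • fP - u q • a q)
        ((∑ j, ((ContinuousLinearMap.apply ℝ ℂ ((Pi.single j 1 : Fin n → ℝ), (0:ℝ))).comp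
              (fderiv ℝ (fderiv ℝ u) p)).smulRight (e j))
          + ((ContinuousLinearMap.apply ℝ ℂ ((0 : Fin n → ℝ), (1:ℝ))).comp
              (fderiv ℝ (fderiv ℝ u) p)).smulRight fW
          - (Complex.I • fderiv ℝ u p).smulRight fP
          - (u p • fderiv ℝ a p + (fderiv ℝ u p).smulRight (a p))) p :=
      (((HasFDerivAt.fun_sum fun j _ => (hEval _).smul_const (e j)).fun_add
          ((hEval _).smul_const fW)).fun_sub
        ((hDu.const_mul Complex.I).smul_const fP)).fun_sub (hDu.fun_smul hDa)
    have hgL := hg.fderiv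
    rw [hgL]
    have hdiag : ∀ j : Fin n,
        fderiv ℝ (fun q => fderiv ℝ u q (Pi.single j 1, 0)) p (Pi.single j 1, 0)
          = fderiv ℝ (fderiv ℝ u) p (Pi.single j 1, 0) (Pi.single j 1, 0) :=
      fun j => by rw [(hEval _).fderiv]; rfl
    simp only [hdiag, ContinuousLinearMap.sub_apply, ContinuousLinearMap.add_apply,
      ContinuousLinearMap.coe_sum', Finset.sum_apply, ContinuousLinearMap.smulRight_apply,
      ContinuousLinearMap.coe_comp', Function.comp_apply, ContinuousLinearMap.apply_apply,
      ContinuousLinearMap.smul_apply, smul_eq_mul]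
    have hswp : ∀ j : Fin n,
        fderiv ℝ (fderiv ℝ u) p ((0 : Fin n → ℝ), (1:ℝ)) (Pi.single j 1, 0)
          = fderiv ℝ (fderiv ℝ u) p (Pi.single j 1, 0) ((0 : Fin n → ℝ), (1:ℝ)) :=
      fun j => hsym _ _
    simp only [hswp]
    exact cw_main e fW fP (a p) he hW hW2 hP2 hWe hPe
      (fun i => fderiv ℝ u p (Pi.single i 1, 0)) (fderiv ℝ u p (0, 1)) (u p)
      (fun i j => fderiv ℝ (fderiv ℝ u) p (Pi.single i 1, 0) (Pi.single j 1, 0))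
      (fun i j => hsym _ _)
      (fun j => fderiv ℝ (fderiv ℝ u) p (Pi.single j 1, 0) ((0 : Fin n → ℝ), (1:ℝ)))
      (fderiv ℝ (fderiv ℝ u) p (0, 1) (0, 1))
      (fun j => fderiv ℝ a p (Pi.single j 1, 0)) (fderiv ℝ a p (0, 1))
  refine ⟨key, fun hV u hu p => ?_⟩
  rw [key u hu p, hV p, Algebra.algebraMap_eq_smul_one, smul_smul, sub_smul,
    mul_comm (u p) (V p)]
  module
end
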